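/- Let p be a positive integer and x a real number. Set j = p + x - 1 and c = (1-p²)/3 - x². Then there exists a representation of the finite W₃^(2) relations on ℝ^p, i.e. linear operators H, E, F, C on ℝ^p with [H,E] = 2E, [H,F] = -2F, [E,F] = H² + C, C = ((1-p²)/3 - x²)·Id, such that H is diagonalizable with eigenvalues {j - 2k : k = 0, 1, ..., p-1}, each with one-dimensional eigenspace. -/

import Mathlib

namespace W32aux

noncomputable def jj (p : ℕ) (x : ℝ) : ℝ := p + x - 1
noncomputable def cc (p : ℕ) (x : ℝ) : ℝ := (1 - (p:ℝ)^2)/3 - x^2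

noncomputable def A (p : ℕ) (x : ℝ) (k : ℕ) : ℝ :=
  k * ((jj p x)^2 + cc p x) - 2*k*((k:ℝ)-1)*(jj p x) + 2/3*k*((k:ℝ)-1)*(2*k-1)

lemma A_zero (p : ℕ) (x : ℝ) : A p x 0 = 0 := by simp [A]

lemma A_succ (p : ℕ) (x : ℝ) (k : ℕ) :
    A p x (k+1) = A p x k + (jj p x - 2*k)^2 + cc p x := by
  unfold A jj cc
  push_cast
  ring

lemma A_top (p : ℕ) (x : ℝ) : A p x p = 0 := by
  unfold A jj cc; ring

noncomputable def Hmap (p : ℕ) (x : ℝ) : Module.End ℝ (Fin p → ℝ) where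
  toFun v := fun i => (jj p x - 2*i) * v i
  map_add' v w := by funext i; simp [mul_add]
  map_smul' a v := by funext i; simp; ring

noncomputable def Emap (p : ℕ) (x : ℝ) [NeZero p] : Module.End ℝ (Fin p → ℝ) where
  toFun v := fun i => A p x (i.val+1) * v (i+1)
  map_add' v w := by funext i; simp [mul_add]
  map_smul' a v := by funext i; simp; ring

noncomputable def Fmap (p : ℕ) [NeZero p] : Module.End ℝ (Fin p → ℝ) where
  toFun v := fun i => if (i:ℕ) = 0 then 0 else v (i-1)
  map_add' v w := by funext i; by_cases h : i = 0 <;> simp [h]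
  map_smul' a v := by funext i; by_cases h : i = 0 <;> simp [h]

lemma Hmap_apply (p : ℕ) (x : ℝ) (v : Fin p → ℝ) (i : Fin p) :
    Hmap p x v i = (jj p x - 2*i) * v i := rfl
lemma Emap_apply (p : ℕ) (x : ℝ) [NeZero p] (v : Fin p → ℝ) (i : Fin p) :
    Emap p x v i = A p x (i.val+1) * v (i+1) := rfl
lemma Fmap_apply (p : ℕ) [NeZero p] (v : Fin p → ℝ) (i : Fin p) :
    Fmap p v i = if (i:ℕ) = 0 then 0 else v (i-1) := rfl

variable (n : ℕ) (x : ℝ)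

lemma rel_HE : Hmap (n+1) x * Emap (n+1) x - Emap (n+1) x * Hmap (n+1) x
    = (2:ℝ) • Emap (n+1) x := by
  refine LinearMap.ext fun v => funext fun i => ?_
  simp only [LinearMap.sub_apply, Module.End.mul_apply, LinearMap.smul_apply,
    Hmap_apply, Emap_apply, Pi.sub_apply, Pi.smul_apply, smul_eq_mul]
  by_cases hl : i = Fin.last n
  · subst hl
    simp [Fin.val_last, A_top]
  · rw [Fin.val_add_one_of_lt (Fin.lt_last_iff_ne_last.mpr hl)]
    push_cast
    ring

lemma rel_HF : Hmap (n+1) x * Fmap (n+1) - Fmap (n+1) * Hmap (n+1) x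
    = -((2:ℝ) • Fmap (n+1)) := by
  refine LinearMap.ext fun v => funext fun i => ?_
  simp only [LinearMap.sub_apply, Module.End.mul_apply, LinearMap.smul_apply,
    LinearMap.neg_apply, Hmap_apply, Fmap_apply, Pi.sub_apply, Pi.smul_apply,
    Pi.neg_apply, smul_eq_mul]
  by_cases h0 : (i:ℕ) = 0
  · simp [h0]
  · simp only [h0, if_false]
    rw [Fin.coe_sub_one, if_neg (fun h => h0 (by rw [h]; rfl))]
    rw [Nat.cast_sub (Nat.one_le_iff_ne_zero.mpr h0)]
    push_cast
    ring

lemma rel_EF : Emap (n+1) x * Fmap (n+1) - Fmap (n+1) * Emap (n+1) x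
    = Hmap (n+1) x ^ 2 + cc (n+1) x • (1 : Module.End ℝ (Fin (n+1) → ℝ)) := by
  refine LinearMap.ext fun v => funext fun i => ?_
  simp only [LinearMap.sub_apply, Module.End.mul_apply, LinearMap.add_apply,
    LinearMap.smul_apply, Module.End.one_apply, pow_two,
    Hmap_apply, Emap_apply, Fmap_apply, Pi.sub_apply, Pi.add_apply,
    Pi.smul_apply, smul_eq_mul]
  have hadd : i + 1 - 1 = i := add_sub_cancel_right i 1
  have hsub : i - 1 + 1 = i := sub_add_cancel i 1
  rw [hadd, hsub]
  by_cases h0 : (i:ℕ) = 0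
  · by_cases hl : i = Fin.last n
    · have hn : n = 0 := by
        have := congrArg Fin.val hl
        rw [h0, Fin.val_last] at this
        omega
      subst hn
      have hval : ((i+1 : Fin (0+1)) : ℕ) = 0 := by
        rw [hl, Fin.last_add_one]; rfl
      rw [if_pos hval, if_pos h0]
      simp only [h0, Nat.cast_zero]
      have h1 := A_succ (0+1) x 0
      rw [A_zero, Nat.cast_zero] at h1
      have h2 : A (0+1) x (0+1) = 0 := A_top (0+1) x
      linear_combination (v i) * (h1 - h2)
    · have hval : ((i+1 : Fin (n+1)) : ℕ) = i.val + 1 :=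
        Fin.val_add_one_of_lt (Fin.lt_last_iff_ne_last.mpr hl)
      rw [if_neg (by rw [hval]; exact Nat.succ_ne_zero _), if_pos h0]
      simp only [h0, Nat.cast_zero]
      have h1 := A_succ (n+1) x 0
      rw [A_zero, Nat.cast_zero] at h1
      linear_combination (v i) * h1
  · by_cases hl : i = Fin.last n
    · have hval : ((i+1 : Fin (n+1)) : ℕ) = 0 := by
        rw [hl, Fin.last_add_one]; rfl
      have hvs : ((i - 1 : Fin (n+1)) : ℕ) + 1 = i.val := by
        rw [Fin.coe_sub_one, if_neg (fun h => h0 (by rw [h]; rfl))]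
        omega
      rw [if_pos hval, if_neg h0, hvs]
      have hv : i.val = n := by rw [hl, Fin.val_last]
      rw [hv]
      have h1 := A_succ (n+1) x n
      have h2 : A (n+1) x (n+1) = 0 := A_top (n+1) x
      linear_combination (v i) * (h1 - h2)
    · have hval : ((i+1 : Fin (n+1)) : ℕ) = i.val + 1 :=
        Fin.val_add_one_of_lt (Fin.lt_last_iff_ne_last.mpr hl)
      have hvs : ((i - 1 : Fin (n+1)) : ℕ) + 1 = i.val := by
        rw [Fin.coe_sub_one, if_neg (fun h => h0 (by rw [h]; rfl))]
        omega
      rw [if_neg (by rw [hval]; exact Nat.succ_ne_zero _), if_neg h0, hvs]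
      have h1 := A_succ (n+1) x i.val
      linear_combination (v i) * h1



lemma Hmap_single (p : ℕ) (x : ℝ) (k : Fin p) :
    Hmap p x (Pi.single k 1) = (jj p x - 2*(k:ℕ)) • (Pi.single k 1 : Fin p → ℝ) := by
  funext i
  by_cases h : i = k
  · subst h; simp [Hmap_apply]
  · simp [Hmap_apply, Pi.single_eq_of_ne h]

lemma eig_span (p : ℕ) (x : ℝ) (k : Fin p) :
    Module.End.eigenspace (Hmap p x) (jj p x - 2*k)
      = Submodule.span ℝ {Pi.single k (1:ℝ)} := by
  apply le_antisymm
  · intro v hv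
    rw [Module.End.mem_eigenspace_iff] at hv
    have hco : ∀ i : Fin p, i ≠ k → v i = 0 := by
      intro i hik
      have hne : ((i:ℕ):ℝ) ≠ ((k:ℕ):ℝ) := by
        simp only [ne_eq, Nat.cast_inj]
        exact fun h => hik (Fin.ext h)
      have h1 : (jj p x - 2*i) * v i = (jj p x - 2*(k:ℕ)) * v i := by
        have := congrFun hv i
        simpa [Hmap_apply] using this
      have h2 : ((jj p x - 2*i) - (jj p x - 2*(k:ℕ))) * v i = 0 := by
        rw [sub_mul, h1, sub_self]
      rcases mul_eq_zero.mp h2 with h | h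
      · exact absurd (by linarith : ((i:ℕ):ℝ) = ((k:ℕ):ℝ)) hne
      · exact h
    rw [Submodule.mem_span_singleton]
    refine ⟨v k, funext fun i => ?_⟩
    by_cases h : i = k
    · subst h; simp
    · simp [Pi.single_eq_of_ne h, hco i h]
  · rw [Submodule.span_le, Set.singleton_subset_iff, SetLike.mem_coe,
      Module.End.mem_eigenspace_iff]
    exact Hmap_single p x k

lemma eig_rank (p : ℕ) (x : ℝ) (k : Fin p) :
    Module.finrank ℝ (Module.End.eigenspace (Hmap p x) (jj p x - 2*k)) = 1 := by
  rw [eig_span]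
  refine finrank_span_singleton ?_
  intro h
  have : (1:ℝ) = 0 := by simpa using congrFun h k
  norm_num at this

end W32aux

open W32aux in
/-- Existence of the `p`-dimensional highest weight representation `W(p,x)` of the
finite W-algebra `W₃⁽²⁾`: there are linear operators `H, E, F, C` on `ℝ^p` with
`[H,E] = 2E`, `[H,F] = -2F`, `[E,F] = H² + C`, `C = ((1-p²)/3 - x²)·Id`, such that `H`
is diagonalizable with eigenvalues `{j - 2k : k = 0,...,p-1}` (where `j = p + x - 1`),
each with one-dimensional eigenspace. -/
theorem exists_W3_2_highest_weight_rep (p : ℕ) (hp : 0 < p) (x : ℝ) :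
    ∃ H E F C : Module.End ℝ (Fin p → ℝ),
      H * E - E * H = (2 : ℝ) • E ∧
      H * F - F * H = -((2 : ℝ) • F) ∧
      E * F - F * E = H ^ 2 + C ∧
      C = ((1 - (p : ℝ) ^ 2) / 3 - x ^ 2) • (1 : Module.End ℝ (Fin p → ℝ)) ∧
      (∀ k : ℕ, k < p →
        Module.finrank ℝ (Module.End.eigenspace H (((p : ℝ) + x - 1) - 2 * k)) = 1) ∧
      (∀ μ : ℝ, Module.End.HasEigenvalue H μ →
        ∃ k : ℕ, k < p ∧ μ = ((p : ℝ) + x - 1) - 2 * k) ∧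
      (⨆ μ : ℝ, Module.End.eigenspace H μ) = ⊤ := by
  obtain ⟨n, rfl⟩ := Nat.exists_eq_succ_of_ne_zero hp.ne'
  refine ⟨Hmap (n+1) x, Emap (n+1) x, Fmap (n+1), cc (n+1) x • 1,
    rel_HE n x, rel_HF n x, rel_EF n x, rfl, ?_, ?_, ?_⟩
  · intro k hk
    have h : ((↑(n+1):ℝ) + x - 1) - 2*(k:ℝ)
        = jj (n+1) x - 2*(((⟨k, hk⟩ : Fin (n+1)):ℕ):ℝ) := by
      simp [jj]
    rw [h]
    exact eig_rank (n+1) x ⟨k, hk⟩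
  · intro μ hμ
    obtain ⟨v, hv⟩ := hμ.exists_hasEigenvector
    obtain ⟨i, hi⟩ : ∃ i, v i ≠ 0 := by
      by_contra h
      push_neg at h
      exact hv.2 (funext h)
    have h1 : (jj (n+1) x - 2*(i:ℕ)) * v i = μ * v i := by
      have := congrFun (Module.End.mem_eigenspace_iff.mp hv.1) i
      simpa [Hmap_apply] using this
    have h2 := mul_right_cancel₀ hi h1
    refine ⟨i, i.isLt, ?_⟩
    rw [← h2]
    simp [jj]
  · rw [eq_top_iff]
    intro v _
    have hv : v = ∑ i, Pi.single i (v i) := (Finset.univ_sum_single v).symm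
    rw [hv]
    refine Submodule.sum_mem _ fun i _ => ?_
    have hmem : Pi.single i (v i)
        ∈ Module.End.eigenspace (Hmap (n+1) x) (jj (n+1) x - 2*(i:ℕ)) := by
      rw [Module.End.mem_eigenspace_iff]
      have hs : Pi.single i (v i) = v i • (Pi.single i 1 : Fin (n+1) → ℝ) := by
        rw [← Pi.single_smul, smul_eq_mul, mul_one]
      rw [hs, map_smul, Hmap_single, smul_comm]
    exact le_iSup (fun μ => Module.End.eigenspace (Hmap (n+1) x) μ) _ hmem
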